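/- With the construction below, every simple left B-module is finite-dimensional over F. -/

import Mathlib

open Matrix

/-- The `n×n` cyclic permutation matrix: identity block `I_{n-1}` in the upper right and
a `1` in the lower-left corner. -/
def cycMat (F : Type*) [Semiring F] (n : ℕ) : Matrix (Fin n) (Fin n) F :=
  Matrix.of fun k l => if (l : ℕ) = ((k : ℕ) + 1) % n then 1 else 0

/-- The matrix unit `E₁₁`, with `1` in the upper-left entry and zeros elsewhere. -/
def e11 (F : Type*) [Semiring F] (n : ℕ) : Matrix (Fin n) (Fin n) F :=
  Matrix.of fun k l => if (k : ℕ) = 0 ∧ (l : ℕ) = 0 then 1 else 0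

/-- Index set: pairs `(n, i)` with `n ≥ 2` and `1 ≤ i ≤ a n` (here `0`-indexed: `i < a n`).
Note that `n` lies in the support `S` of `a` automatically, since `i < a n` forces `a n ≠ 0`. -/
abbrev Idx (a : ℕ → ℕ) : Type := {p : ℕ × ℕ // 2 ≤ p.1 ∧ p.2 < a p.1}

/-- The ambient algebra `A = ∏_{n ∈ S} ∏_{i=1}^{a n} M_n(F)`. -/
abbrev ConstrA (F : Type*) [Field F] (a : ℕ → ℕ) : Type _ :=
  ∀ p : Idx a, Matrix (Fin p.1.1) (Fin p.1.1) F

/-- The element `e` whose `(n,i)` component is `λ_{n,i} • E₁₁`. -/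
def elemE {F : Type*} [Field F] (a : ℕ → ℕ) (lam : Idx a → F) : ConstrA F a :=
  fun p => lam p • e11 F p.1.1

/-- The element `σ` whose `(n,i)` component is the cyclic permutation matrix `P_n`. -/
def elemS (F : Type*) [Field F] (a : ℕ → ℕ) : ConstrA F a :=
  fun p => cycMat F p.1.1
/-- `B = F⟨e, σ⟩`, the unital `F`-subalgebra of `A` generated by `e` and `σ`. -/
abbrev ConstrB (F : Type*) [Field F] (a : ℕ → ℕ) (lam : Idx a → F) :
    Subalgebra F (ConstrA F a) :=
  Algebra.adjoin F {elemE a lam, elemS F a}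

universe u

section AuxLemmas

variable {F : Type*} [Field F]

lemma cycMat_pow_apply {n : ℕ} (hn : 0 < n) (j : ℕ) (k l : Fin n) :
    (cycMat F n ^ j) k l = if (l : ℕ) = ((k : ℕ) + j) % n then 1 else 0 := by
  induction j generalizing l with
  | zero =>
    rw [pow_zero, Matrix.one_apply]
    have h0 : ((k : ℕ) + 0) % n = (k : ℕ) := by
      simpa using Nat.mod_eq_of_lt k.isLt
    rw [h0]
    by_cases h : k = l
    · subst h; simp
    · rw [if_neg h, if_neg (fun hl => h (Fin.ext hl.symm))]
  | succ j ih =>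
    rw [pow_succ, Matrix.mul_apply]
    have hc : ((k : ℕ) + j) % n < n := Nat.mod_lt _ hn
    set c : Fin n := ⟨((k : ℕ) + j) % n, hc⟩ with hcdef
    have hterm : ∀ m : Fin n, (cycMat F n ^ j) k m * cycMat F n m l
        = if m = c then cycMat F n m l else 0 := by
      intro m
      rw [ih]
      by_cases hm : m = c
      · rw [if_pos, if_pos hm, one_mul]
        rw [hm]
      · rw [if_neg, if_neg hm, zero_mul]
        intro hmv; exact hm (Fin.ext hmv)
    rw [Finset.sum_congr rfl fun m _ => hterm m, Finset.sum_ite_eq' Finset.univ c,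
      if_pos (Finset.mem_univ c)]
    show (if (l : ℕ) = ((c : ℕ) + 1) % n then (1 : F) else 0) = _
    have : ((c : ℕ) + 1) % n = ((k : ℕ) + (j + 1)) % n := by
      show (((k : ℕ) + j) % n + 1) % n = _
      rw [Nat.mod_add_mod, Nat.add_assoc]
    rw [this]

lemma comp_eq_zero {n j : ℕ} (hn : 2 ≤ n) (hj1 : 1 ≤ j) (hjn : j < n) (lam : F) :
    (lam • e11 F n) * (cycMat F n ^ j) * (lam • e11 F n) = 0 := by
  have hn0 : 0 < n := by omega
  rw [mul_assoc]
  ext k l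
  rw [Matrix.mul_apply, Matrix.zero_apply]
  apply Finset.sum_eq_zero
  intro m _
  by_cases hkm : (k : ℕ) = 0 ∧ (m : ℕ) = 0
  · have h2 : ((cycMat F n ^ j) * (lam • e11 F n)) m l = 0 := by
      rw [Matrix.mul_apply]
      apply Finset.sum_eq_zero
      intro m' _
      by_cases hml : (m' : ℕ) = 0 ∧ (l : ℕ) = 0
      · have hz : (cycMat F n ^ j) m m' = 0 := by
          rw [cycMat_pow_apply hn0, if_neg]
          intro h
          rw [hml.1, hkm.2, Nat.zero_add, Nat.mod_eq_of_lt hjn] at h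
          omega
        rw [hz, zero_mul]
      · have hz : (lam • e11 F n) m' l = 0 := by
          rw [Matrix.smul_apply]
          show lam • (if (m' : ℕ) = 0 ∧ (l : ℕ) = 0 then (1 : F) else 0) = 0
          rw [if_neg hml, smul_zero]
        rw [hz, mul_zero]
    rw [h2, mul_zero]
  · have hz : (lam • e11 F n) k m = 0 := by
      rw [Matrix.smul_apply]
      show lam • (if (k : ℕ) = 0 ∧ (m : ℕ) = 0 then (1 : F) else 0) = 0
      rw [if_neg hkm, smul_zero]
    rw [hz, zero_mul]

variable {N : Type u} [AddCommGroup N] [Module F N]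

lemma cyclic_aux (T : Module.End F N) (v : N) (hv : v ≠ 0)
    (hsimp : ∀ W : Submodule F N, (∀ x ∈ W, T x ∈ W) →
      W ≤ Submodule.span F (Set.range fun k : ℕ => (T ^ k) v) → W = ⊥ ∨ W = ⊤) :
    FiniteDimensional F N := by
  classical
  have hmemR : ∀ k : ℕ, (T ^ k) v ∈ (Set.range fun k : ℕ => (T ^ k) v) := fun k => ⟨k, rfl⟩
  have hTpow : ∀ k : ℕ, T ((T ^ k) v) = (T ^ (k + 1)) v := by
    intro k; rw [pow_succ', Module.End.mul_apply]
  set W1 : Submodule F N := Submodule.span F (Set.range fun k : ℕ => (T ^ (k + 1)) v) with hW1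
  have hW1stab : ∀ x ∈ W1, T x ∈ W1 := by
    intro x hx
    have hmap : W1.map T ≤ W1 := by
      rw [hW1, Submodule.map_span]
      apply Submodule.span_le.mpr
      rintro _ ⟨_, ⟨k, rfl⟩, rfl⟩
      exact Submodule.subset_span ⟨k + 1, (hTpow (k + 1)).symm⟩
    exact hmap ⟨x, hx, rfl⟩
  have hW1le : W1 ≤ Submodule.span F (Set.range fun k : ℕ => (T ^ k) v) :=
    Submodule.span_mono (by rintro _ ⟨k, rfl⟩; exact hmemR (k + 1))
  rcases hsimp W1 hW1stab hW1le with h1 | h1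
  · have hTv : T v = 0 := by
      have hm : T v ∈ W1 := Submodule.subset_span ⟨0, by simp⟩
      rwa [h1, Submodule.mem_bot] at hm
    have hUstab : ∀ x ∈ Submodule.span F {v}, T x ∈ Submodule.span F {v} := by
      intro x hx
      obtain ⟨c, rfl⟩ := Submodule.mem_span_singleton.mp hx
      rw [_root_.map_smul, hTv, smul_zero]
      exact Submodule.zero_mem _
    have hUle : Submodule.span F {v} ≤ Submodule.span F (Set.range fun k : ℕ => (T ^ k) v) := by
      apply Submodule.span_le.mpr
      intro x hx
      rw [Set.mem_singleton_iff] at hx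
      subst hx
      exact Submodule.subset_span ⟨0, by simp⟩
    rcases hsimp _ hUstab hUle with h | h
    · exact absurd ((Submodule.mem_bot F).mp (h ▸ Submodule.mem_span_singleton_self v)) hv
    · refine Module.finite_def.mpr ⟨{v}, ?_⟩
      rw [Finset.coe_singleton]; exact h
  · have hvW1 : v ∈ W1 := h1 ▸ Submodule.mem_top
    rw [hW1] at hvW1
    obtain ⟨c, hc⟩ := Finsupp.mem_span_range_iff_exists_finsupp.mp hvW1
    have hcne : c ≠ 0 := by
      rintro rfl
      rw [Finsupp.sum_zero_index] at hc
      exact hv hc.symm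
    have hsupp : c.support.Nonempty := Finsupp.support_nonempty_iff.mpr hcne
    set d := c.support.max' hsupp with hd
    have hdmem : d ∈ c.support := Finset.max'_mem _ _
    have hdle : ∀ k ∈ c.support, k ≤ d := fun k hk => Finset.le_max' _ k hk
    have hcd : c d ≠ 0 := Finsupp.mem_support_iff.mp hdmem
    set S0 : Finset N := (Finset.range (d + 1)).image fun k => (T ^ k) v with hS0
    set U : Submodule F N := Submodule.span F (S0 : Set N) with hU
    have hmemU : ∀ k, k ≤ d → (T ^ k) v ∈ U := fun k hk =>
      Submodule.subset_span (Finset.mem_coe.mpr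
        (Finset.mem_image.mpr ⟨k, Finset.mem_range.mpr (by omega), rfl⟩))
    have hvU : v ∈ U := by
      have := hmemU 0 (by omega)
      rwa [pow_zero, Module.End.one_apply] at this
    have hkey : (T ^ (d + 1)) v ∈ U := by
      have h0 : ∑ k ∈ c.support, c k • (T ^ (k + 1)) v = v := hc
      have hsum : c d • (T ^ (d + 1)) v + ∑ k ∈ c.support.erase d, c k • (T ^ (k + 1)) v = v :=
        (Finset.add_sum_erase _ (fun k => c k • (T ^ (k + 1)) v) hdmem).trans h0
      have h1 : c d • (T ^ (d + 1)) v = v - ∑ k ∈ c.support.erase d, c k • (T ^ (k + 1)) v :=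
        eq_sub_of_add_eq hsum
      have hexpr : (T ^ (d + 1)) v
          = (c d)⁻¹ • (v - ∑ k ∈ c.support.erase d, c k • (T ^ (k + 1)) v) := by
        rw [← h1, smul_smul, inv_mul_cancel₀ hcd, one_smul]
      rw [hexpr]
      apply Submodule.smul_mem
      apply Submodule.sub_mem _ hvU
      apply Submodule.sum_mem
      intro k hk
      have hk1 : k ∈ c.support := Finset.mem_of_mem_erase hk
      have hk2 : k ≠ d := Finset.ne_of_mem_erase hk
      have hkd := hdle k hk1
      exact Submodule.smul_mem _ _ (hmemU (k + 1) (by omega))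
    have hUstab : ∀ x ∈ U, T x ∈ U := by
      intro x hx
      have hmap : U.map T ≤ U := by
        rw [hU, Submodule.map_span]
        apply Submodule.span_le.mpr
        rintro _ ⟨y, hy, rfl⟩
        rw [Finset.mem_coe, hS0, Finset.mem_image] at hy
        obtain ⟨k, hk, rfl⟩ := hy
        rw [hTpow k]
        rcases Nat.lt_or_ge (k + 1) (d + 1) with h | h
        · exact hmemU (k + 1) (by omega)
        · have hkd : k = d := by
            rw [Finset.mem_range] at hk; omega
          subst hkd; exact hkey
      exact hmap ⟨x, hx, rfl⟩
    have hUle : U ≤ Submodule.span F (Set.range fun k : ℕ => (T ^ k) v) := by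
      apply Submodule.span_le.mpr
      intro y hy
      rw [Finset.mem_coe, hS0, Finset.mem_image] at hy
      obtain ⟨k, _, rfl⟩ := hy
      exact Submodule.subset_span (hmemR k)
    rcases hsimp U hUstab hUle with h | h
    · exact absurd ((Submodule.mem_bot F).mp (h ▸ hvU)) hv
    · exact Module.finite_def.mpr ⟨S0, h⟩

lemma caseii_aux [Nontrivial N] (X S : Module.End F N)
    (hrel : ∀ j : ℕ, 1 ≤ j → ∀ u : N, X ((S ^ j) (X u)) = 0)
    (hsimp : ∀ W : Submodule F N, (∀ x ∈ W, X x ∈ W) → (∀ x ∈ W, S x ∈ W) → W = ⊥ ∨ W = ⊤) :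
    FiniteDimensional F N := by
  classical
  by_cases hX : ∀ u : N, X u = 0
  · obtain ⟨v, hv⟩ := exists_ne (0 : N)
    apply cyclic_aux S v hv
    intro W hSW _
    exact hsimp W (fun x hx => by rw [hX x]; exact W.zero_mem) hSW
  · push_neg at hX
    obtain ⟨v, hv⟩ := hX
    set w := X v with hw
    set G : ℕ × ℕ → N := fun ac => (S ^ (ac.1 + 1)) ((X ^ ac.2) w) with hG
    set N1 : Submodule F N := Submodule.span F (Set.range G) with hN1
    have hXG : ∀ ac : ℕ × ℕ, X (G ac) = 0 := by
      rintro ⟨a, c⟩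
      show X ((S ^ (a + 1)) ((X ^ c) w)) = 0
      cases c with
      | zero =>
        rw [pow_zero, Module.End.one_apply, hw]
        exact hrel (a + 1) (by omega) v
      | succ c' =>
        have hp : (X ^ (c' + 1)) w = X ((X ^ c') w) := by
          rw [pow_succ', Module.End.mul_apply]
        rw [hp]
        exact hrel (a + 1) (by omega) _
    have hXN1 : ∀ x ∈ N1, X x = 0 := by
      intro x hx
      induction hx using Submodule.span_induction with
      | mem y hy => obtain ⟨ac, rfl⟩ := hy; exact hXG ac
      | zero => exact map_zero X
      | add y z _ _ ihy ihz => rw [map_add, ihy, ihz, add_zero]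
      | smul c y _ ihy => rw [_root_.map_smul, ihy, smul_zero]
    have hSN1 : ∀ x ∈ N1, S x ∈ N1 := by
      intro x hx
      have hmap : N1.map S ≤ N1 := by
        rw [hN1, Submodule.map_span]
        apply Submodule.span_le.mpr
        rintro _ ⟨_, ⟨⟨a, c⟩, rfl⟩, rfl⟩
        apply Submodule.subset_span
        refine ⟨(a + 1, c), ?_⟩
        show (S ^ (a + 1 + 1)) ((X ^ c) w) = S ((S ^ (a + 1)) ((X ^ c) w))
        rw [pow_succ', Module.End.mul_apply]
      exact hmap ⟨x, hx, rfl⟩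
    rcases hsimp N1 (fun x hx => by rw [hXN1 x hx]; exact N1.zero_mem) hSN1 with h | h
    · have hS0 : ∀ k : ℕ, S ((X ^ k) w) = 0 := by
        intro k
        have hmem : G (0, k) ∈ N1 := Submodule.subset_span ⟨(0, k), rfl⟩
        rw [h, Submodule.mem_bot] at hmem
        have hGk : G (0, k) = S ((X ^ k) w) := by
          show (S ^ (0 + 1)) ((X ^ k) w) = _
          rw [pow_one]
        rw [← hGk, hmem]
      apply cyclic_aux X w hv
      intro W hXW hle
      apply hsimp W hXW
      have hSspan : ∀ y ∈ Submodule.span F (Set.range fun k : ℕ => (X ^ k) w), S y = 0 := by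
        intro y hy
        induction hy using Submodule.span_induction with
        | mem u hu => obtain ⟨k, rfl⟩ := hu; exact hS0 k
        | zero => exact map_zero S
        | add u z _ _ ihu ihz => rw [map_add, ihu, ihz, add_zero]
        | smul c u _ ihu => rw [_root_.map_smul, ihu, smul_zero]
      intro x hx
      rw [hSspan x (hle hx)]; exact W.zero_mem
    · exact absurd (hXN1 v (h ▸ Submodule.mem_top)) hv

end AuxLemmas

set_option maxHeartbeats 1000000 in
set_option synthInstance.maxHeartbeats 200000 in
/-- Every simple left module over the algebra `B = F⟨e,σ⟩` is finite-dimensional over `F`. -/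
theorem stmt_7 (F : Type*) [Field F] [IsAlgClosed F] (a : ℕ → ℕ) (lam : Idx a → F)
    (hlam_ne : ∀ p, lam p ≠ 0)
    (hlam : ∀ p q : Idx a, p.1.1 = q.1.1 → p ≠ q → lam p ≠ lam q ∧ lam p ≠ -lam q)
    (N : Type u) [AddCommGroup N] [Module F N] [Module (↥(ConstrB F a lam)) N]
    [IsScalarTower F (↥(ConstrB F a lam)) N]
    (hsimple : IsSimpleModule (↥(ConstrB F a lam)) N) :
    FiniteDimensional F N := by
  classical
  haveI : Nontrivial N := IsSimpleModule.nontrivial (↥(ConstrB F a lam)) N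
  have heB : elemE a lam ∈ ConstrB F a lam := Algebra.subset_adjoin (Set.mem_insert _ _)
  have hsB : elemS F a ∈ ConstrB F a lam :=
    Algebra.subset_adjoin (Set.mem_insert_of_mem _ rfl)
  set eB : ↥(ConstrB F a lam) := ⟨elemE a lam, heB⟩ with heBdef
  set sB : ↥(ConstrB F a lam) := ⟨elemS F a, hsB⟩ with hsBdef
  have smul_linear : ∀ b : ↥(ConstrB F a lam), ∀ (c : F) (x : N), b • (c • x) = c • (b • x) := by
    intro b c x
    have h1 : c • x = (algebraMap F ↥(ConstrB F a lam) c) • x := (algebraMap_smul _ c x).symm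
    rw [h1, ← mul_smul, ← Algebra.commutes, mul_smul, algebraMap_smul]
  let act : ↥(ConstrB F a lam) → Module.End F N := fun b =>
    { toFun := fun x => b • x
      map_add' := fun x y => smul_add b x y
      map_smul' := fun c x => smul_linear b c x }
  have act_apply : ∀ (b : ↥(ConstrB F a lam)) (x : N), act b x = b • x := fun _ _ => rfl
  have hact_pow : ∀ (b : ↥(ConstrB F a lam)) (jj : ℕ) (x : N),
      ((act b) ^ jj) x = (b ^ jj) • x := by
    intro b jj
    induction jj with
    | zero => intro x; rw [pow_zero, pow_zero, Module.End.one_apply, one_smul]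
    | succ jj ih =>
      intro x
      rw [pow_succ, pow_succ, Module.End.mul_apply, act_apply, ih, ← mul_smul]
  -- any F-subspace stable under the actions of e and σ is ⊥ or ⊤
  have hsimp : ∀ W : Submodule F N,
      (∀ x ∈ W, act eB x ∈ W) → (∀ x ∈ W, act sB x ∈ W) → W = ⊥ ∨ W = ⊤ := by
    intro W hXW hSW
    have hstab : ∀ (b : ↥(ConstrB F a lam)) (x : N), x ∈ W → b • x ∈ W := by
      rintro ⟨bv, hb⟩
      induction hb using Algebra.adjoin_induction with
      | mem y hy =>
        rcases hy with h | h
        · subst h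
          intro x hx
          exact hXW x hx
        · rw [Set.mem_singleton_iff] at h
          subst h
          intro x hx
          exact hSW x hx
      | algebraMap r =>
        intro x hx
        show (algebraMap F ↥(ConstrB F a lam) r) • x ∈ W
        rw [algebraMap_smul]
        exact W.smul_mem r hx
      | add y z hy hz ihy ihz =>
        intro x hx
        show ((⟨y, hy⟩ : ↥(ConstrB F a lam)) + (⟨z, hz⟩ : ↥(ConstrB F a lam))) • x ∈ W
        rw [add_smul]
        exact W.add_mem (ihy x hx) (ihz x hx)
      | mul y z hy hz ihy ihz =>
        intro x hx
        show ((⟨y, hy⟩ : ↥(ConstrB F a lam)) * (⟨z, hz⟩ : ↥(ConstrB F a lam))) • x ∈ W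
        rw [mul_smul]
        exact ihy _ (ihz x hx)
    let W' : Submodule ↥(ConstrB F a lam) N :=
      { carrier := W
        add_mem' := fun h1 h2 => W.add_mem h1 h2
        zero_mem' := W.zero_mem
        smul_mem' := fun b {x} hx => hstab b x hx }
    have hmemW' : ∀ x : N, x ∈ W' ↔ x ∈ W := fun x => Iff.rfl
    rcases hsimple.1.2 W' with h | h
    · left
      rw [Submodule.eq_bot_iff]
      intro x hx
      have : x ∈ W' := (hmemW' x).mpr hx
      rw [h, Submodule.mem_bot] at this
      exact this
    · right
      rw [Submodule.eq_top_iff']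
      intro x
      exact (hmemW' x).mp (h ▸ Submodule.mem_top)
  by_cases hc : ∀ j : ℕ, 1 ≤ j → ∀ v : N, (eB * sB ^ j * eB) • v = 0
  · -- asymptotic case: the relations e σ^j e = 0 hold on N
    apply caseii_aux (act eB) (act sB) _ hsimp
    intro j hj u
    rw [act_apply, hact_pow, act_apply, ← mul_smul, ← mul_smul]
    exact hc j hj u
  · -- some e σ^j e acts nontrivially; N is an image of a finite-dimensional corner
    push_neg at hc
    obtain ⟨j, hj1, v0, hv0⟩ := hc
    set z : ↥(ConstrB F a lam) := eB * sB ^ j * eB with hz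
    have hzsupp : ∀ p : Idx a, j < p.1.1 → (z : ConstrA F a) p = 0 := by
      intro p hp
      have hzval : (z : ConstrA F a) p
          = (lam p • e11 F p.1.1) * (cycMat F p.1.1) ^ j * (lam p • e11 F p.1.1) := rfl
      rw [hzval]
      exact comp_eq_zero p.2.1 hj1 hp (lam p)
    -- the F-subspace of B of elements supported on components with n ≤ j
    let W : Submodule F ↥(ConstrB F a lam) :=
      { carrier := {b | ∀ p : Idx a, j < p.1.1 → (b : ConstrA F a) p = 0}
        add_mem' := by
          intro b c hb hc p hp
          have : ((b + c : ↥(ConstrB F a lam)) : ConstrA F a) p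
              = (b : ConstrA F a) p + (c : ConstrA F a) p := rfl
          rw [this, hb p hp, hc p hp, add_zero]
        zero_mem' := fun p hp => rfl
        smul_mem' := by
          intro c b hb p hp
          have : ((c • b : ↥(ConstrB F a lam)) : ConstrA F a) p
              = c • (b : ConstrA F a) p := rfl
          rw [this, hb p hp, smul_zero] }
    -- W is finite-dimensional
    have hT : {p : Idx a | p.1.1 ≤ j}.Finite := by
      have hsub : {p : Idx a | p.1.1 ≤ j} ⊆
          Subtype.val ⁻¹' (Set.Iic j ×ˢ Set.Iio ((Finset.range (j + 1)).sup a)) := by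
        intro p hp
        refine ⟨hp, ?_⟩
        have h1 : p.1.2 < a p.1.1 := p.2.2
        have h2 : a p.1.1 ≤ (Finset.range (j + 1)).sup a :=
          Finset.le_sup (Finset.mem_range.mpr (by exact Nat.lt_succ_of_le hp))
        exact lt_of_lt_of_le h1 h2
      exact Set.Finite.subset
        (((Set.finite_Iic j).prod (Set.finite_Iio _)).preimage Subtype.val_injective.injOn) hsub
    haveI : Fintype {p : Idx a | p.1.1 ≤ j} := hT.fintype
    let res : W →ₗ[F] (∀ p : {p : Idx a | p.1.1 ≤ j}, Matrix (Fin p.1.1.1) (Fin p.1.1.1) F) :=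
      { toFun := fun w p => ((w : ↥(ConstrB F a lam)) : ConstrA F a) p.1
        map_add' := fun w1 w2 => rfl
        map_smul' := fun c w => rfl }
    have hres : Function.Injective res := by
      intro w1 w2 hww
      apply Subtype.ext
      apply Subtype.ext
      funext p
      rcases le_or_gt p.1.1 j with h | h
      · exact congrFun hww ⟨p, h⟩
      · rw [w1.2 p h, w2.2 p h]
    haveI : FiniteDimensional F W := FiniteDimensional.of_injective res hres
    -- N is the image of W under evaluation at v0
    let φ : W →ₗ[F] N :=
      { toFun := fun w => ((w : ↥(ConstrB F a lam)) : ↥(ConstrB F a lam)) • v0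
        map_add' := fun w1 w2 => add_smul _ _ v0
        map_smul' := fun c w => smul_assoc c _ v0 }
    have hspan : Submodule.span ↥(ConstrB F a lam) {z • v0} = ⊤ := by
      rcases hsimple.1.2 (Submodule.span ↥(ConstrB F a lam) {z • v0}) with h | h
      · exfalso
        apply hv0
        have hm : z • v0 ∈ Submodule.span ↥(ConstrB F a lam) {z • v0} :=
          Submodule.mem_span_singleton_self _
        rw [h, Submodule.mem_bot] at hm
        exact hm
      · exact h
    have hsurj : Function.Surjective φ := by
      intro y
      have hy : y ∈ Submodule.span ↥(ConstrB F a lam) {z • v0} := hspan ▸ Submodule.mem_top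
      obtain ⟨b, hb⟩ := Submodule.mem_span_singleton.mp hy
      refine ⟨⟨b * z, ?_⟩, ?_⟩
      · intro p hp
        have : ((b * z : ↥(ConstrB F a lam)) : ConstrA F a) p
            = (b : ConstrA F a) p * (z : ConstrA F a) p := rfl
        rw [this, hzsupp p hp, mul_zero]
      · show (b * z) • v0 = y
        rw [mul_smul, hb]
    exact Module.Finite.of_surjective φ hsurj
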